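/- Let H be a symmetric positive definite m × m real matrix with all eigenvalues λ_1, ..., λ_m in (0, 1), let T : ℝ^m → ℝ^m be nonexpansive with a fixed point v*, and let c = min_j λ_j(1 − λ_j) > 0. Define v^{k+1} = (I − H) v^k + H T(v^k). Then for every k, ‖v^{k+1} − v*‖²_{H^{-1}} ≤ ‖v^k − v*‖²_{H^{-1}} − c ‖v^k − T(v^k)‖²_{H^{-1}}. -/

import Mathlib

open Matrix

/-- The weighted squared norm `‖v‖²_{H⁻¹} = vᵀ H⁻¹ v` associated with a symmetric positive
definite matrix `H`. -/
noncomputable def wnormSq {m : ℕ} (H : Matrix (Fin m) (Fin m) ℝ)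
    (v : EuclideanSpace ℝ (Fin m)) : ℝ :=
  inner ℝ v (Matrix.toEuclideanLin H⁻¹ v)

/-- Key spectral fact: `I - H - c • H⁻¹` is positive semidefinite. -/
lemma key_psd {m : ℕ} (H : Matrix (Fin m) (Fin m) ℝ) (hH : H.PosDef)
    (heig : ∀ i, hH.1.eigenvalues i ∈ Set.Ioo (0:ℝ) 1) {c : ℝ}
    (hc : ∀ j, c ≤ hH.1.eigenvalues j * (1 - hH.1.eigenvalues j)) :
    (1 - H - c • H⁻¹).PosSemidef := by
  have hA := hH.1
  set U : Matrix (Fin m) (Fin m) ℝ := (hA.eigenvectorUnitary : Matrix (Fin m) (Fin m) ℝ) with hUdef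
  set d : Fin m → ℝ := hA.eigenvalues with hddef
  have hdne : ∀ i, d i ≠ 0 := fun i => ne_of_gt (heig i).1
  have hU1 : U * star U = 1 := (Matrix.mem_unitaryGroup_iff).mp hA.eigenvectorUnitary.2
  have hU2 : star U * U = 1 := (Matrix.mem_unitaryGroup_iff').mp hA.eigenvectorUnitary.2
  have hspec : H = U * diagonal d * star U := by
    have := hA.spectral_theorem
    simpa using this
  have hinv : H⁻¹ = U * diagonal (fun i => (d i)⁻¹) * star U := by
    apply Matrix.inv_eq_right_inv
    rw [hspec]
    calc U * diagonal d * star U * (U * diagonal (fun i => (d i)⁻¹) * star U)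
        = U * (diagonal d * (star U * U) * diagonal (fun i => (d i)⁻¹)) * star U := by
          simp only [Matrix.mul_assoc]
      _ = U * (diagonal d * diagonal (fun i => (d i)⁻¹)) * star U := by rw [hU2, Matrix.mul_one]
      _ = U * diagonal (fun i => d i * (d i)⁻¹) * star U := by rw [Matrix.diagonal_mul_diagonal]
      _ = U * 1 * star U := by
          congr 1; congr 1
          rw [show (fun i => d i * (d i)⁻¹) = fun _ => (1:ℝ) from funext fun i =>
            mul_inv_cancel₀ (hdne i), Matrix.diagonal_one]
      _ = 1 := by rw [Matrix.mul_one, hU1]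
  have hmain : 1 - H - c • H⁻¹ =
      U * diagonal (fun i => 1 - d i - c * (d i)⁻¹) * star U := by
    rw [hinv, hspec]
    have h1 : (1 : Matrix (Fin m) (Fin m) ℝ) = U * 1 * star U := by
      rw [Matrix.mul_one, hU1]
    rw [h1]
    have hdiag : diagonal (fun i => 1 - d i - c * (d i)⁻¹) =
        1 - diagonal d - c • diagonal (fun i => (d i)⁻¹) := by
      rw [← Matrix.diagonal_one, ← Matrix.diagonal_smul, ← Matrix.diagonal_sub,
        ← Matrix.diagonal_sub]
      rfl
    rw [hdiag]
    simp only [Matrix.sub_mul, Matrix.mul_sub, Matrix.smul_mul, Matrix.mul_smul,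
      Matrix.mul_one, hU1]
  have hnonneg : ∀ i, (0:ℝ) ≤ 1 - d i - c * (d i)⁻¹ := by
    intro i
    have h0 : 0 < d i := (heig i).1
    have hle : c * (d i)⁻¹ ≤ (1 - d i) := by
      have := mul_le_mul_of_nonneg_right (hc i) (le_of_lt (inv_pos.mpr h0))
      calc c * (d i)⁻¹ ≤ d i * (1 - d i) * (d i)⁻¹ := this
        _ = 1 - d i := by field_simp
    linarith
  rw [hmain, Matrix.star_eq_conjTranspose U]
  exact (Matrix.PosSemidef.diagonal (fun i => hnonneg i)).mul_mul_conjTranspose_same U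

/-- Core inequality at the level of plain vectors. -/
lemma core_ineq {m : ℕ} (H : Matrix (Fin m) (Fin m) ℝ) (hH : H.PosDef)
    (heig : ∀ i, hH.1.eigenvalues i ∈ Set.Ioo (0:ℝ) 1) {c : ℝ}
    (hc : ∀ j, c ≤ hH.1.eigenvalues j * (1 - hH.1.eigenvalues j))
    (e r : Fin m → ℝ) (hne : (e - r) ⬝ᵥ (e - r) ≤ e ⬝ᵥ e) :
    (e - H *ᵥ r) ⬝ᵥ (H⁻¹ *ᵥ (e - H *ᵥ r)) ≤
      e ⬝ᵥ (H⁻¹ *ᵥ e) - c * (r ⬝ᵥ (H⁻¹ *ᵥ r)) := by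
  have hHsym : Hᵀ = H := hH.1
  have hdet : IsUnit H.det := isUnit_iff_ne_zero.mpr (ne_of_gt hH.det_pos)
  have hHiH : H⁻¹ * H = 1 := Matrix.nonsing_inv_mul H hdet
  have hHHi : H * H⁻¹ = 1 := Matrix.mul_nonsing_inv H hdet
  -- (H *ᵥ x) ⬝ᵥ y = x ⬝ᵥ (H *ᵥ y)
  have hmv : ∀ x : Fin m → ℝ, H *ᵥ x = x ᵥ* H := by
    intro x
    conv_lhs => rw [← hHsym]
    exact Matrix.mulVec_transpose H x
  have hsymdot : ∀ x y : Fin m → ℝ, (H *ᵥ x) ⬝ᵥ y = x ⬝ᵥ (H *ᵥ y) := by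
    intro x y
    rw [hmv, ← Matrix.dotProduct_mulVec]
  -- expansion of the LHS
  have hexp : (e - H *ᵥ r) ⬝ᵥ (H⁻¹ *ᵥ (e - H *ᵥ r)) =
      e ⬝ᵥ (H⁻¹ *ᵥ e) - 2 * (e ⬝ᵥ r) + r ⬝ᵥ (H *ᵥ r) := by
    have h1 : H⁻¹ *ᵥ (H *ᵥ r) = r := by
      rw [Matrix.mulVec_mulVec, hHiH, Matrix.one_mulVec]
    rw [Matrix.mulVec_sub, sub_dotProduct, dotProduct_sub,
      dotProduct_sub, h1]
    have h2 : (H *ᵥ r) ⬝ᵥ (H⁻¹ *ᵥ e) = r ⬝ᵥ e := by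
      rw [hsymdot r (H⁻¹ *ᵥ e), Matrix.mulVec_mulVec, hHHi, Matrix.one_mulVec]
    rw [h2, hsymdot r r, dotProduct_comm r e]
    ring
  -- nonexpansiveness consequence
  have hne' : r ⬝ᵥ r ≤ 2 * (e ⬝ᵥ r) := by
    have : (e - r) ⬝ᵥ (e - r) = e ⬝ᵥ e - 2 * (e ⬝ᵥ r) + r ⬝ᵥ r := by
      rw [sub_dotProduct, dotProduct_sub, dotProduct_sub,
        dotProduct_comm r e]
      ring
    rw [this] at hne
    linarith
  -- PSD consequence
  have hpsd := (key_psd H hH heig hc).dotProduct_mulVec_nonneg r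
  have hpsd' : c * (r ⬝ᵥ (H⁻¹ *ᵥ r)) ≤ r ⬝ᵥ r - r ⬝ᵥ (H *ᵥ r) := by
    have hstar : star r = r := by simp
    rw [hstar] at hpsd
    rw [Matrix.sub_mulVec, Matrix.sub_mulVec, Matrix.one_mulVec, Matrix.smul_mulVec,
      dotProduct_sub, dotProduct_sub, dotProduct_smul] at hpsd
    simp only [smul_eq_mul] at hpsd
    linarith
  rw [hexp]
  linarith

/-- Let `H` be a symmetric positive definite `m × m` real matrix with all
eigenvalues `λ_j ∈ (0,1)`, let `T` be nonexpansive with fixed point `v*`, and let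
`c = min_j λ_j (1 − λ_j) > 0`.  For the iteration `v (k+1) = (I − H) v k + H T(v k)` one has,
for every `k`,
`‖v^{k+1} − v*‖²_{H⁻¹} ≤ ‖v^k − v*‖²_{H⁻¹} − c ‖v^k − T v^k‖²_{H⁻¹}`. -/
theorem preconditioned_mann_descent {m : ℕ}
    (H : Matrix (Fin m) (Fin m) ℝ) (hH : H.PosDef)
    (heig : ∀ i, hH.1.eigenvalues i ∈ Set.Ioo (0:ℝ) 1)
    (T : EuclideanSpace ℝ (Fin m) → EuclideanSpace ℝ (Fin m))
    (hT : ∀ x y, ‖T x - T y‖ ≤ ‖x - y‖)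
    (vstar : EuclideanSpace ℝ (Fin m)) (hfix : T vstar = vstar)
    (c : ℝ)
    (hc : IsLeast (Set.range fun j => hH.1.eigenvalues j * (1 - hH.1.eigenvalues j)) c)
    (v : ℕ → EuclideanSpace ℝ (Fin m))
    (hrec : ∀ k, v (k + 1) =
      (v k - Matrix.toEuclideanLin H (v k)) + Matrix.toEuclideanLin H (T (v k))) :
    ∀ k, wnormSq H (v (k + 1) - vstar) ≤
      wnormSq H (v k - vstar) - c * wnormSq H (v k - T (v k)) := by
  intro k
  have hc' : ∀ j, c ≤ hH.1.eigenvalues j * (1 - hH.1.eigenvalues j) := fun j =>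
    hc.2 ⟨j, rfl⟩
  set E : EuclideanSpace ℝ (Fin m) := v k - vstar with hE
  set R : EuclideanSpace ℝ (Fin m) := v k - T (v k) with hR
  have hv : v (k + 1) - vstar = E - Matrix.toEuclideanLin H R := by
    rw [hrec k, hR, map_sub, hE]
    abel
  -- identify with plain vectors
  set e : Fin m → ℝ := WithLp.equiv 2 _ E with he
  set r : Fin m → ℝ := WithLp.equiv 2 _ R with hr
  have h1 : wnormSq H (v (k + 1) - vstar) = (e - H *ᵥ r) ⬝ᵥ (H⁻¹ *ᵥ (e - H *ᵥ r)) := by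
    rw [hv, wnormSq, EuclideanSpace.inner_eq_star_dotProduct, dotProduct_comm]; rfl
  have h2 : wnormSq H E = e ⬝ᵥ (H⁻¹ *ᵥ e) := by
    rw [wnormSq, EuclideanSpace.inner_eq_star_dotProduct, dotProduct_comm]; rfl
  have h3 : wnormSq H R = r ⬝ᵥ (H⁻¹ *ᵥ r) := by
    rw [wnormSq, EuclideanSpace.inner_eq_star_dotProduct, dotProduct_comm]; rfl
  have hne : (e - r) ⬝ᵥ (e - r) ≤ e ⬝ᵥ e := by
    have hTv : ‖T (v k) - vstar‖ ≤ ‖E‖ := by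
      have := hT (v k) vstar
      rwa [hfix] at this
    have hsub : E - R = T (v k) - vstar := by rw [hE, hR]; abel
    have hdot1 : (e - r) ⬝ᵥ (e - r) = (inner ℝ (E - R) (E - R) : ℝ) := rfl
    have hdot2 : e ⬝ᵥ e = (inner ℝ E E : ℝ) := rfl
    rw [hdot1, hdot2, real_inner_self_eq_norm_sq, real_inner_self_eq_norm_sq, hsub]
    have h0 : (0:ℝ) ≤ ‖T (v k) - vstar‖ := norm_nonneg _
    nlinarith [norm_nonneg E]
  rw [h1, h2, h3]
  exact core_ineq H hH heig hc' e r hne
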